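/- Let A ∈ ℝ^{n×d} (n, d ≥ 1), b ∈ ℝ^n, λ > 0, q > 0, and let Ψ_q, F_PAR, F_ridge be as follows: Ψ_q(x) = (k + 1/2)q(|x| − kq) + k²q²/2 with k = ⌊|x|/q⌋, F_PAR(x) = (1/(2n))‖Ax − b‖² + λΣ_{i=1}^d Ψ_q(x_i), F_ridge(x) = (1/(2n))‖Ax − b‖² + (λ/2)‖x‖². Let x_PAR be a global minimizer of F_PAR and x_ridge a global minimizer of F_ridge. Then for every x* ∈ ℝ^d, (1/n)‖A(x_PAR − x*)‖² ≤ dλq² + (2/n)‖A(x_ridge − x*)‖². -/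

import Mathlib

/-- The piecewise-affine regularizer with quantization values `Q = {0, ±q, ±2q, …}`
that interpolates the quadratic `x²/2` at the grid points: with `k = ⌊|x|/q⌋`,
`Ψ_q(x) = (k + 1/2)·q·(|x| − kq) + k²q²/2`. -/
noncomputable def quadPAR (q : ℝ) (x : ℝ) : ℝ :=
  ((⌊|x| / q⌋₊ : ℝ) + 1 / 2) * q * (|x| - (⌊|x| / q⌋₊ : ℝ) * q) +
    (⌊|x| / q⌋₊ : ℝ) ^ 2 * q ^ 2 / 2

lemma quadPAR_floor_le (q : ℝ) (hq : 0 < q) (x : ℝ) :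
    (⌊|x| / q⌋₊ : ℝ) * q ≤ |x| := by
  have h := Nat.floor_le (by positivity : (0:ℝ) ≤ |x| / q)
  calc (⌊|x| / q⌋₊ : ℝ) * q ≤ (|x| / q) * q := by nlinarith
    _ = |x| := by field_simp

lemma quadPAR_lt_floor (q : ℝ) (hq : 0 < q) (x : ℝ) :
    |x| < ((⌊|x| / q⌋₊ : ℝ) + 1) * q := by
  have h := Nat.lt_floor_add_one (|x| / q)
  calc |x| = (|x| / q) * q := by field_simp
    _ < ((⌊|x| / q⌋₊ : ℝ) + 1) * q := by nlinarith

lemma quadPAR_lb (q : ℝ) (hq : 0 < q) (x : ℝ) : x ^ 2 / 2 ≤ quadPAR q x := by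
  have hk1 := quadPAR_floor_le q hq x
  have hk2 := quadPAR_lt_floor q hq x
  have hx2 : x ^ 2 = |x| ^ 2 := (sq_abs x).symm
  unfold quadPAR
  nlinarith [mul_nonneg (sub_nonneg.2 hk1) (sub_nonneg.2 hk2.le)]

lemma quadPAR_ub (q : ℝ) (hq : 0 < q) (x : ℝ) : quadPAR q x ≤ x ^ 2 / 2 + q ^ 2 / 8 := by
  have hk1 := quadPAR_floor_le q hq x
  have hk2 := quadPAR_lt_floor q hq x
  have hx2 : x ^ 2 = |x| ^ 2 := (sq_abs x).symm
  unfold quadPAR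
  nlinarith [sq_nonneg (|x| - (⌊|x| / q⌋₊ : ℝ) * q - q / 2)]

lemma lin_zero (l c : ℝ) (hc : 0 ≤ c) (h : ∀ t : ℝ, 0 ≤ t * l + t ^ 2 * c) : l = 0 := by
  rcases eq_or_lt_of_le hc with hc0 | hc0
  · have h1 := h (-l)
    nlinarith
  · have ht := h (-(l / (2 * c)))
    have hcne : c ≠ 0 := ne_of_gt hc0
    have heq : (-(l / (2 * c))) * l + (-(l / (2 * c))) ^ 2 * c = -(l ^ 2 / (4 * c)) := by
      field_simp; ring
    rw [heq] at ht
    have h2 : l ^ 2 / (4 * c) ≤ 0 := by linarith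
    have h3 : l ^ 2 ≤ 0 := by
      rcases div_nonpos_iff.mp h2 with ⟨ha, hb⟩ | ⟨ha, hb⟩
      · nlinarith
      · exact ha
    exact pow_eq_zero_iff two_ne_zero |>.mp (le_antisymm h3 (sq_nonneg l))

/-- Deterministic combination step in the proof of Theorem 4.2:
the excess risk `(1/n)‖A(x_PAR − x*)‖²` of the PAR-regularized least-squares solution
is at most `dλq²` plus twice the ridge excess risk. -/
theorem par_excess_risk_combination
    (n d : ℕ) (hn : 0 < n) (hd : 0 < d)
    (A : Matrix (Fin n) (Fin d) ℝ) (b : Fin n → ℝ)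
    (lam : ℝ) (hlam : 0 < lam) (q : ℝ) (hq : 0 < q)
    (FPAR Fridge : (Fin d → ℝ) → ℝ)
    (hFPAR : ∀ x, FPAR x =
      (1 / (2 * n)) * ∑ i, (A.mulVec x i - b i) ^ 2 + lam * ∑ i, quadPAR q (x i))
    (hFridge : ∀ x, Fridge x =
      (1 / (2 * n)) * ∑ i, (A.mulVec x i - b i) ^ 2 + (lam / 2) * ∑ i, (x i) ^ 2)
    (xPAR : Fin d → ℝ) (hxPAR : ∀ y, FPAR xPAR ≤ FPAR y)
    (xridge : Fin d → ℝ) (hxridge : ∀ y, Fridge xridge ≤ Fridge y) :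
    ∀ xstar : Fin d → ℝ,
      (1 / n) * ∑ i, (A.mulVec (xPAR - xstar) i) ^ 2 ≤
        (d : ℝ) * lam * q ^ 2 + (2 / n) * ∑ i, (A.mulVec (xridge - xstar) i) ^ 2 := by
  intro xstar
  have hnR : (0:ℝ) < n := by exact_mod_cast hn
  have hne : (n:ℝ) ≠ 0 := ne_of_gt hnR
  -- Fridge ≤ FPAR pointwise
  have hle : ∀ x, Fridge x ≤ FPAR x := by
    intro x
    rw [hFridge, hFPAR]
    have hs : (∑ i, (x i) ^ 2) / 2 ≤ ∑ i, quadPAR q (x i) := by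
      rw [Finset.sum_div]
      exact Finset.sum_le_sum (fun i _ => quadPAR_lb q hq (x i))
    have h2 := mul_le_mul_of_nonneg_left hs hlam.le
    have h3 : lam * ((∑ i, (x i) ^ 2) / 2) = (lam / 2) * ∑ i, (x i) ^ 2 := by ring
    linarith
  -- FPAR ≤ Fridge + d·lam·q²/8 pointwise
  have hub : ∀ x, FPAR x ≤ Fridge x + (d : ℝ) * lam * q ^ 2 / 8 := by
    intro x
    rw [hFridge, hFPAR]
    have h1 : ∑ i, quadPAR q (x i) ≤ (∑ i, (x i) ^ 2) / 2 + (d : ℝ) * (q ^ 2 / 8) := by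
      calc ∑ i, quadPAR q (x i) ≤ ∑ i, ((x i) ^ 2 / 2 + q ^ 2 / 8) :=
            Finset.sum_le_sum (fun i _ => quadPAR_ub q hq (x i))
        _ = (∑ i, (x i) ^ 2) / 2 + (d : ℝ) * (q ^ 2 / 8) := by
            rw [Finset.sum_add_distrib, ← Finset.sum_div, Finset.sum_const,
              Finset.card_univ, Fintype.card_fin, nsmul_eq_mul]
    have h2 := mul_le_mul_of_nonneg_left h1 hlam.le
    have h3 : lam * ((∑ i, (x i) ^ 2) / 2 + (d : ℝ) * (q ^ 2 / 8))
        = (lam / 2) * ∑ i, (x i) ^ 2 + (d : ℝ) * lam * q ^ 2 / 8 := by ring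
    linarith
  -- quadratic expansion of Fridge around xridge along v := xPAR - xridge
  set v : Fin d → ℝ := xPAR - xridge with hv
  set l : ℝ := (1 / n) * ∑ i, (A.mulVec xridge i - b i) * A.mulVec v i
      + lam * ∑ i, xridge i * v i with hl
  set c : ℝ := (1 / (2 * n)) * ∑ i, (A.mulVec v i) ^ 2 + (lam / 2) * ∑ i, (v i) ^ 2 with hc
  have hexp : ∀ t : ℝ, Fridge (xridge + t • v) = Fridge xridge + t * l + t ^ 2 * c := by
    intro t
    rw [hFridge, hFridge, hl, hc]
    have hA : ∀ i, A.mulVec (xridge + t • v) i = A.mulVec xridge i + t * A.mulVec v i := by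
      intro i
      rw [Matrix.mulVec_add, Matrix.mulVec_smul]
      simp
    have hsum1 : ∑ i, (A.mulVec (xridge + t • v) i - b i) ^ 2
        = ∑ i, (A.mulVec xridge i - b i) ^ 2
          + 2 * t * ∑ i, (A.mulVec xridge i - b i) * A.mulVec v i
          + t ^ 2 * ∑ i, (A.mulVec v i) ^ 2 := by
      rw [Finset.mul_sum, Finset.mul_sum, ← Finset.sum_add_distrib, ← Finset.sum_add_distrib]
      refine Finset.sum_congr rfl (fun i _ => ?_)
      rw [hA i]; ring
    have hsum2 : ∑ i, ((xridge + t • v) i) ^ 2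
        = ∑ i, (xridge i) ^ 2 + 2 * t * ∑ i, xridge i * v i + t ^ 2 * ∑ i, (v i) ^ 2 := by
      rw [Finset.mul_sum, Finset.mul_sum, ← Finset.sum_add_distrib, ← Finset.sum_add_distrib]
      refine Finset.sum_congr rfl (fun i _ => ?_)
      simp only [Pi.add_apply, Pi.smul_apply, smul_eq_mul]; ring
    rw [hsum1, hsum2]
    field_simp
    ring
  have hcnn : 0 ≤ c := by
    rw [hc]
    have h1 : (0:ℝ) ≤ ∑ i, (A.mulVec v i) ^ 2 := Finset.sum_nonneg fun i _ => sq_nonneg _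
    have h2 : (0:ℝ) ≤ ∑ i, (v i) ^ 2 := Finset.sum_nonneg fun i _ => sq_nonneg _
    positivity
  have hl0 : l = 0 := by
    refine lin_zero l c hcnn (fun t => ?_)
    have h := hxridge (xridge + t • v)
    rw [hexp t] at h
    linarith
  have hpt : xridge + (1:ℝ) • v = xPAR := by
    rw [hv]; funext i; simp
  have key : Fridge xPAR = Fridge xridge + c := by
    have h := hexp 1
    rw [hpt] at h
    rw [h, hl0]; ring
  have hchain : c ≤ (d : ℝ) * lam * q ^ 2 / 8 := by
    have h1 : Fridge xPAR ≤ FPAR xPAR := hle xPAR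
    have h2 : FPAR xPAR ≤ FPAR xridge := hxPAR xridge
    have h3 : FPAR xridge ≤ Fridge xridge + (d : ℝ) * lam * q ^ 2 / 8 := hub xridge
    have h4 : Fridge xridge + c ≤ Fridge xridge + (d : ℝ) * lam * q ^ 2 / 8 := by
      rw [← key]; linarith
    linarith
  have hS : (1 / (2 * (n:ℝ))) * ∑ i, (A.mulVec v i) ^ 2 ≤ (d : ℝ) * lam * q ^ 2 / 8 := by
    have h2 : (0:ℝ) ≤ (lam / 2) * ∑ i, (v i) ^ 2 := by
      have := Finset.sum_nonneg (fun i (_ : i ∈ Finset.univ) => sq_nonneg (v i))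
      positivity
    rw [hc] at hchain
    linarith
  have hS' : ∑ i, (A.mulVec v i) ^ 2 ≤ (n:ℝ) * ((d : ℝ) * lam * q ^ 2 / 4) := by
    have h := mul_le_mul_of_nonneg_left hS (by positivity : (0:ℝ) ≤ 2 * n)
    have he : (2 * (n:ℝ)) * ((1 / (2 * n)) * ∑ i, (A.mulVec v i) ^ 2)
        = ∑ i, (A.mulVec v i) ^ 2 := by field_simp
    rw [he] at h
    have : (2 * (n:ℝ)) * ((d : ℝ) * lam * q ^ 2 / 8) = (n:ℝ) * ((d : ℝ) * lam * q ^ 2 / 4) := by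
      ring
    linarith
  -- final combination
  have hdecomp : ∀ i, A.mulVec (xPAR - xstar) i
      = A.mulVec v i + A.mulVec (xridge - xstar) i := by
    intro i
    have hsplit : xPAR - xstar = v + (xridge - xstar) := by
      rw [hv]; funext j; simp
    rw [hsplit, Matrix.mulVec_add]; simp
  have hsumle : ∑ i, (A.mulVec (xPAR - xstar) i) ^ 2
      ≤ 2 * ∑ i, (A.mulVec v i) ^ 2 + 2 * ∑ i, (A.mulVec (xridge - xstar) i) ^ 2 := by
    rw [Finset.mul_sum, Finset.mul_sum, ← Finset.sum_add_distrib]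
    refine Finset.sum_le_sum (fun i _ => ?_)
    rw [hdecomp i]
    nlinarith [sq_nonneg (A.mulVec v i - A.mulVec (xridge - xstar) i)]
  have hdq : (0:ℝ) ≤ (d:ℝ) * lam * q ^ 2 := by positivity
  have hgoal : ∑ i, (A.mulVec (xPAR - xstar) i) ^ 2
      ≤ (n:ℝ) * ((d:ℝ) * lam * q ^ 2) + 2 * ∑ i, (A.mulVec (xridge - xstar) i) ^ 2 := by
    have hhalf : 2 * ((n:ℝ) * ((d : ℝ) * lam * q ^ 2 / 4)) ≤ (n:ℝ) * ((d:ℝ) * lam * q ^ 2) := by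
      nlinarith
    linarith
  calc (1 / (n:ℝ)) * ∑ i, (A.mulVec (xPAR - xstar) i) ^ 2
      = (∑ i, (A.mulVec (xPAR - xstar) i) ^ 2) / n := by ring
    _ ≤ ((n:ℝ) * ((d:ℝ) * lam * q ^ 2) + 2 * ∑ i, (A.mulVec (xridge - xstar) i) ^ 2) / n :=
        (div_le_div_iff_of_pos_right hnR).mpr hgoal
    _ = (d : ℝ) * lam * q ^ 2 + (2 / n) * ∑ i, (A.mulVec (xridge - xstar) i) ^ 2 := by
        field_simp
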